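/- Let G be a finite group, k an algebraically closed field of characteristic r, and V an irreducible kG-module. If dim V > [G : H] for some subgroup H ≤ G with O_{r'}(H) = O^r(H), then H^1(G, V) = 0. -/

import Mathlib

/-- `OrEqOr r H` says that the largest normal subgroup of `H` of order not divisible
by `r` coincides with the smallest normal subgroup of `H` with `r`-group quotient
(i.e. `O_{r'}(H) = O^r(H)`), where for finite `H` the quotient `H ⧸ N` being an
`r`-group is expressed by the index of `N` being a power of `r`. -/
def OrEqOr (r : ℕ) (H : Type) [Group H] : Prop :=
  ∃ A : Subgroup H, A.Normal ∧ (¬ r ∣ Nat.card A) ∧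
    (∀ N : Subgroup H, N.Normal → ¬ r ∣ Nat.card N → N ≤ A) ∧
    (∃ m : ℕ, A.index = r ^ m) ∧
    (∀ N : Subgroup H, N.Normal → (∃ m : ℕ, N.index = r ^ m) → A ≤ N)

open CategoryTheory


lemma invariant_eq_bot_or_top {k G : Type} [Field k] [Group G]
    (V : Rep k G) [Simple V] (W : Submodule k V)
    (hW : ∀ (g : G) x, x ∈ W → V.ρ g x ∈ W) : W = ⊥ ∨ W = ⊤ := by
  classical
  by_cases hbot : W = ⊥
  · exact Or.inl hbot
  right
  let ρW : Representation k G W :=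
    { toFun := fun g => (V.ρ g).restrict (hW g)
      map_one' := by ext x; simp [LinearMap.restrict_apply]
      map_mul' := fun g h => by
        ext x; simp [LinearMap.restrict_apply, map_mul] }
  let WRep : Rep k G := Rep.of ρW
  let ι : WRep ⟶ V :=
    Rep.ofHom (σ := V.ρ) ⟨W.subtype, fun g => LinearMap.ext fun x => rfl⟩
  have hinj : Function.Injective ι.hom := Subtype.val_injective
  haveI : Mono ι := (Rep.mono_iff_injective ι).2 hinj
  obtain ⟨w, hw, hw0⟩ := Submodule.exists_mem_ne_zero_of_ne_bot hbot
  have hne : ι ≠ 0 := by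
    intro h
    have : ι.hom (⟨w, hw⟩ : W) = w := rfl
    rw [h] at this
    exact hw0 (by simpa using this.symm)
  haveI := isIso_of_mono_of_nonzero hne
  have hsurj := (Rep.epi_iff_surjective ι).1 inferInstance
  rw [Submodule.eq_top_iff']
  intro x
  obtain ⟨y, hy⟩ := hsurj x
  have hy' : (ι.hom (show W from y) : CoeSort.coe V) = x := hy
  exact hy' ▸ (show W from y).2


lemma exists_H_fixed {r : ℕ} [hp : Fact r.Prime] {k : Type} [Field k] [CharP k r]
    {H : Type} [Group H] [Finite H] {M : Type} [AddCommGroup M] [Module k M]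
    (τ : Representation k H M) (A : Subgroup H) (hnorm : A.Normal)
    (hA : ¬ r ∣ Nat.card A) {m : ℕ} (hi : A.index = r ^ m)
    (v : M) (hv : v ≠ 0) (hfix : ∀ a : A, τ (a : H) v = v) :
    ∃ w : M, w ≠ 0 ∧ ∀ h : H, τ h w = w := by
  classical
  letI : Algebra (ZMod r) k := ZMod.algebra k r
  letI : Module (ZMod r) M := Module.compHom M (algebraMap (ZMod r) k)
  have hsmul : ∀ (c : ZMod r) (x : M), c • x = (algebraMap (ZMod r) k c) • x :=
    fun _ _ => rfl
  -- τ h as a ZMod r linear map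
  have tower : ∀ (h : H) (c : ZMod r) (x : M), τ h (c • x) = c • τ h x := by
    intro h c x; rw [hsmul, map_smul, hsmul]
  let L : H → M →ₗ[ZMod r] M := fun h =>
    { toFun := τ h, map_add' := map_add _, map_smul' := tower h }
  set U : Submodule (ZMod r) M :=
    Submodule.span (ZMod r) (Set.range fun h : H => τ h v) with hU
  have hvU : v ∈ U := Submodule.subset_span ⟨1, by simp⟩
  have hmapgen : ∀ (h h' : H), τ h (τ h' v) = τ (h * h') v := fun h h' => by
    rw [map_mul]; rfl
  have hmap : ∀ (h : H), ∀ x ∈ U, τ h x ∈ U := by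
    intro h x hx
    have : U ≤ Submodule.comap (L h) U := by
      rw [hU, Submodule.span_le]
      rintro _ ⟨h', rfl⟩
      exact Submodule.subset_span ⟨h * h', (hmapgen h h').symm⟩
    exact this hx
  have hAfix : ∀ (a : A), ∀ x ∈ U, τ (a : H) x = x := by
    intro a x hx
    have : U ≤ LinearMap.eqLocus (L (a : H)) LinearMap.id := by
      rw [hU, Submodule.span_le]
      rintro _ ⟨h', rfl⟩
      show τ (a : H) (τ h' v) = τ h' v
      have hc : (h'⁻¹ * (a : H) * h') ∈ A := by
        have := hnorm.conj_mem (a : H) a.2 h'⁻¹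
        simpa using this
      rw [hmapgen, show (a : H) * h' = h' * (h'⁻¹ * (a : H) * h') by group,
        ← hmapgen, hfix ⟨_, hc⟩]
    exact this hx
  haveI : Module.Finite (ZMod r) U :=
    Module.Finite.span_of_finite _ (Set.finite_range _)
  haveI : Finite U := Module.finite_of_finite (ZMod r)
  haveI : Fintype U := Fintype.ofFinite _
  haveI : NeZero r := ⟨hp.out.ne_zero⟩
  haveI : Nontrivial U := ⟨⟨⟨v, hvU⟩, 0, fun h => hv (by simpa using Subtype.ext_iff.1 h)⟩⟩
  -- Sylow subgroup acts on U
  obtain ⟨P⟩ := (inferInstance : Nonempty (Sylow r H))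
  letI : SMul P U := ⟨fun p x => ⟨τ (p : H) x.1, hmap _ _ x.2⟩⟩
  letI : MulAction P U :=
    { one_smul := fun x => Subtype.ext (by
        show τ ((1 : P) : H) x.1 = x.1
        simp
      )
      mul_smul := fun p q x => Subtype.ext (by
        show τ ((p * q : P) : H) x.1 = τ (p : H) (τ (q : H) x.1)
        push_cast
        rw [map_mul]; rfl
      ) }
  have hmod := P.isPGroup'.card_modEq_card_fixedPoints U
  -- r divides card U
  have hcardU : Fintype.card U = r ^ Module.finrank (ZMod r) U := by
    have := Module.card_eq_pow_finrank (K := ZMod r) (V := U)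
    rwa [ZMod.card r] at this
  have hrU : r ∣ Nat.card U := by
    rw [Nat.card_eq_fintype_card, hcardU]
    exact dvd_pow_self r (Module.finrank_pos (R := ZMod r) (M := U)).ne'
  have h0fix : (0 : U) ∈ MulAction.fixedPoints P U := by
    intro p
    exact Subtype.ext (by show τ (p : H) (0 : M) = 0; simp)
  -- a nonzero fixed point exists
  have hex : ∃ w : U, w ∈ MulAction.fixedPoints P U ∧ w ≠ 0 := by
    by_contra hc
    push_neg at hc
    have hsub : MulAction.fixedPoints P U = {0} := by
      apply Set.eq_singleton_iff_unique_mem.2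
      exact ⟨h0fix, fun w hw => hc w hw⟩
    have hone : Nat.card (MulAction.fixedPoints P U) = 1 := by rw [hsub]; simp
    have : r ∣ 1 := by
      rw [← hone]
      exact (Nat.modEq_zero_iff_dvd).1 ((hmod.symm.trans
        ((Nat.modEq_zero_iff_dvd).2 hrU)).symm).symm
    have h1' := Nat.le_of_dvd one_pos this
    have h2r := hp.out.two_le
    omega
  obtain ⟨w, hwfix, hwne⟩ := hex
  have hPfix : ∀ p : P, τ (p : H) w.1 = w.1 := fun p => Subtype.ext_iff.1 (hwfix p)
  -- subgroup fixing w
  let K : Subgroup H :=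
    { carrier := {h : H | τ h w.1 = w.1}
      one_mem' := by simp
      mul_mem' := fun {a b} ha hb => by
        show τ (a * b) w.1 = w.1
        rw [map_mul]
        show τ a (τ b w.1) = w.1
        rw [hb, ha]
      inv_mem' := fun {a} ha => by
        show τ a⁻¹ w.1 = w.1
        conv_lhs => rw [← ha]
        rw [← Module.End.mul_apply, ← map_mul, inv_mul_cancel, map_one]
        rfl }
  have hAK : A ≤ K := fun a ha => hAfix ⟨a, ha⟩ w.1 w.2
  have hPK : (P : Subgroup H) ≤ K := fun p hp' => hPfix ⟨p, hp'⟩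
  -- A ⊔ P = ⊤ by counting
  have hA0 : Nat.card A ≠ 0 := Nat.card_pos.ne'
  have hcardH : Nat.card A * r ^ m = Nat.card H := by
    rw [← hi]; exact Subgroup.card_mul_index A
  have hfactor : (Nat.card H).factorization r = m := by
    rw [← hcardH, Nat.factorization_mul hA0 (pow_ne_zero _ hp.out.ne_zero)]
    simp [Nat.factorization_eq_zero_of_not_dvd hA, hp.out.factorization_pow]
  have hcardP : Nat.card P = r ^ m := by
    rw [Sylow.card_eq_multiplicity, hfactor]
  have hcop : Nat.Coprime (Nat.card A) (Nat.card P) := by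
    rw [hcardP]
    exact Nat.Coprime.pow_right m (Nat.coprime_comm.1
      ((Nat.Prime.coprime_iff_not_dvd hp.out).2 hA))
  have h1 : Nat.card A ∣ Nat.card (A ⊔ (P : Subgroup H) : Subgroup H) :=
    Subgroup.card_dvd_of_le le_sup_left
  have h2 : Nat.card P ∣ Nat.card (A ⊔ (P : Subgroup H) : Subgroup H) :=
    Subgroup.card_dvd_of_le le_sup_right
  have h3 : Nat.card A * Nat.card P ∣ Nat.card (A ⊔ (P : Subgroup H) : Subgroup H) :=
    hcop.mul_dvd_of_dvd_of_dvd h1 h2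
  have h4 : Nat.card (A ⊔ (P : Subgroup H) : Subgroup H) ∣ Nat.card H :=
    Subgroup.card_subgroup_dvd_card _
  have h5 : Nat.card A * Nat.card P = Nat.card H := by rw [hcardP]; exact hcardH
  have h6 : (A ⊔ (P : Subgroup H) : Subgroup H) = ⊤ :=
    Subgroup.eq_top_of_card_eq _ (Nat.dvd_antisymm h4 (h5 ▸ h3))
  have hK : ∀ h : H, h ∈ K := by
    intro h
    have : h ∈ (A ⊔ (P : Subgroup H) : Subgroup H) := h6 ▸ Subgroup.mem_top h
    exact sup_le hAK hPK this
  exact ⟨w.1, fun h => hwne (Subtype.ext h), fun h => hK h⟩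

lemma span_F_zero {k G : Type} [Field k] [Group G] [Finite G]
    (V : Rep k G) [Simple V] [FiniteDimensional k V] (H : Subgroup G)
    (hdim : H.index < Module.finrank k V) (F : G → V)
    (hquot : ∀ (g : G) (h : H), F (g * (h : G)) = F g)
    (hstable : ∀ g g' : G, V.ρ g (F g') ∈ Submodule.span k (Set.range F)) :
    ∀ g : G, F g = 0 := by
  classical
  set W := Submodule.span k (Set.range F) with hWdef
  have hW : ∀ (g : G), ∀ x ∈ W, V.ρ g x ∈ W := by
    intro g x hx
    have hmap : Submodule.map (V.ρ g) W ≤ W := by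
      rw [hWdef, Submodule.map_span, Submodule.span_le]
      rintro _ ⟨_, ⟨g', rfl⟩, rfl⟩
      exact hstable g g'
    exact hmap ⟨x, hx, rfl⟩
  rcases invariant_eq_bot_or_top V W hW with h | h
  · intro g
    have : F g ∈ W := Submodule.subset_span ⟨g, rfl⟩
    rw [h] at this
    simpa using this
  · exfalso
    haveI : Fintype (G ⧸ H) := Fintype.ofFinite _
    let Fbar : G ⧸ H → V := Quotient.lift F (by
      intro a b hab
      have hab' : a⁻¹ * b ∈ H := (QuotientGroup.leftRel_apply).1 hab
      have : b = a * ((⟨a⁻¹ * b, hab'⟩ : H) : G) := by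
        simp [mul_assoc]
      rw [this, hquot]
      )
    have hrange : Set.range F ⊆ Set.range Fbar := by
      rintro _ ⟨g, rfl⟩
      exact ⟨QuotientGroup.mk g, rfl⟩
    have h1 : Module.finrank k V ≤ Module.finrank k
        (Submodule.span k (Set.range Fbar)) := by
      rw [← finrank_top k V, ← h]
      exact Submodule.finrank_mono (Submodule.span_mono hrange)
    have h2 : Module.finrank k (Submodule.span k (Set.range Fbar)) ≤
        Fintype.card (G ⧸ H) := by
      refine le_trans (finrank_span_le_card _) ?_
      rw [Set.toFinset_range]
      exact le_trans (Finset.card_image_le) (le_of_eq (Finset.card_univ))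
    have h3 : H.index = Fintype.card (G ⧸ H) := by
      rw [Subgroup.index, Nat.card_eq_fintype_card]
    omega


/-- Let `G` be a finite group, `k` an algebraically closed field of
characteristic `r`, and `V` an irreducible `kG`-module. If `dim V > [G : H]` for some
`H ≤ G` with `O_{r'}(H) = O^r(H)`, then `H^1(G, V) = 0`. -/
theorem stmt5 {r : ℕ} [Fact r.Prime] {k G : Type} [Field k] [IsAlgClosed k] [CharP k r]
    [Group G] [Finite G] (V : Rep k G) [Simple V] [FiniteDimensional k V]
    (H : Subgroup G) (hH : OrEqOr r H)
    (hdim : H.index < Module.finrank k V) :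
    Limits.IsZero (groupCohomology V 1) := by
  classical
  obtain ⟨A, hnorm, hAcard, -, ⟨m, hAidx⟩, -⟩ := hH
  let τ : Representation k H V := V.ρ.comp H.subtype
  -- Claim: every A-fixed vector of V is zero.
  have hClaim : ∀ x : (V : Type), (∀ a : A, V.ρ ((a : H) : G) x = x) → x = 0 := by
    intro x hx
    by_contra hx0
    obtain ⟨w, hw0, hwfix⟩ := exists_H_fixed τ A hnorm hAcard hAidx x hx0 hx
    have hz := span_F_zero V H hdim (fun g => V.ρ g w)
      (by
        intro g h
        show V.ρ (g * (h : G)) w = V.ρ g w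
        rw [map_mul]
        have : V.ρ ((h : G)) w = w := hwfix h
        show V.ρ g (V.ρ (h : G) w) = V.ρ g w
        rw [this])
      (by
        intro g g'
        have : V.ρ g (V.ρ g' w) = V.ρ (g * g') w := by
          rw [map_mul]; rfl
        rw [this]
        exact Submodule.subset_span ⟨g * g', rfl⟩)
    have := hz 1
    simp only [map_one, Module.End.one_apply] at this
    exact hw0 this
  -- now kill a cocycle
  have hsub : Subsingleton (groupCohomology.H1 V) := by
    refine subsingleton_of_forall_eq 0 fun x => groupCohomology.H1_induction_on x fun f => ?_
    rw [groupCohomology.H1π_eq_zero_iff]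
    haveI : Fintype A := Fintype.ofFinite _
    have hf : ∀ g h : G, f (g * h) = V.ρ g (f h) + f g :=
      (groupCohomology.mem_cocycles₁_iff (f : G → V)).1 f.2
    set S : (V : Type) := ∑ a : A, f (((a : H) : G)) with hS
    have hn : ((Nat.card A : ℕ) : k) ≠ 0 := by
      intro hcon
      rw [CharP.cast_eq_zero_iff k r] at hcon
      exact hAcard hcon
    set v : (V : Type) := ((Nat.card A : ℕ) : k)⁻¹ • S with hv
    -- on A, f is the coboundary of -v
    have hfA : ∀ a : A, f (((a : H) : G)) = v - V.ρ ((a : H) : G) v := by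
      intro a
      have hre : ∑ b : A, f (((a * b : A) : H) : G) = S := by
        rw [hS]
        exact Fintype.sum_equiv (Equiv.mulLeft a) _ _ (fun b => rfl)
      have hexp : ∀ b : A, f ((((a * b : A) : H) : G)) =
          V.ρ ((a : H) : G) (f ((b : H) : G)) + f ((a : H) : G) := by
        intro b
        have : (((a * b : A) : H) : G) = ((a : H) : G) * ((b : H) : G) := by
          push_cast; rfl
        rw [this, hf]
      rw [Finset.sum_congr rfl (fun b _ => hexp b)] at hre
      rw [Finset.sum_add_distrib, ← map_sum, Finset.sum_const, Finset.card_univ] at hre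
      have hcard : (Fintype.card A) • f ((a : H) : G) =
          ((Nat.card A : ℕ) : k) • f ((a : H) : G) := by
        rw [Nat.card_eq_fintype_card]
        exact ((Nat.cast_smul_eq_nsmul k _ _).symm)
      rw [hcard] at hre
      rw [← hS] at hre
      have : ((Nat.card A : ℕ) : k) • f ((a : H) : G) = S - V.ρ ((a : H) : G) S :=
        eq_sub_of_add_eq' hre
      have := congrArg (fun z => ((Nat.card A : ℕ) : k)⁻¹ • z) this
      simp only [smul_sub, inv_smul_smul₀ hn, ← hv] at this
      rw [this, hv, map_smul]
    set F : G → (V : Type) := fun g => f g + (V.ρ g v - v) with hF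
    have hFmul : ∀ g g' : G, F (g * g') = V.ρ g (F g') + F g := by
      intro g g'
      rw [hF]
      simp only
      rw [hf, map_mul]
      have : V.ρ g (V.ρ g' v) = (V.ρ g * V.ρ g') v := rfl
      simp only [map_add, map_sub, this]
      abel
    have hFA : ∀ a : A, F (((a : H) : G)) = 0 := by
      intro a
      rw [hF]
      simp only
      rw [hfA a]
      abel
    have hFH : ∀ h : H, F ((h : G)) = 0 := by
      intro h
      apply hClaim
      intro a
      have h1 : F (((a : H) : G) * (h : G)) = V.ρ ((a : H) : G) (F (h : G)) := by
        rw [hFmul, hFA, add_zero]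
      have hc : (h⁻¹ * (a : H) * h) ∈ A := by
        have := hnorm.conj_mem (a : H) a.2 h⁻¹
        simpa using this
      have h2 : ((a : H) : G) * (h : G) = (h : G) * (((⟨_, hc⟩ : A) : H) : G) := by
        push_cast
        group
      have h3 : F (((a : H) : G) * (h : G)) = F ((h : G)) := by
        rw [h2, show ((h : G) * (((⟨_, hc⟩ : A) : H) : G)) =
          ((h : G) * ((((⟨_, hc⟩ : A) : H) : G))) from rfl, hFmul,
          hFA, map_zero, zero_add]
      rw [← h1, h3]
    have hFquot : ∀ (g : G) (h : H), F (g * (h : G)) = F g := by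
      intro g h
      rw [hFmul, hFH, map_zero, zero_add]
    have hz := span_F_zero V H hdim F hFquot (by
      intro g g'
      have : V.ρ g (F g') = F (g * g') - F g := by rw [hFmul]; abel
      rw [this]
      exact Submodule.sub_mem _ (Submodule.subset_span ⟨g * g', rfl⟩)
        (Submodule.subset_span ⟨g, rfl⟩))
    refine ⟨-v, funext fun g => ?_⟩
    rw [groupCohomology.d₀₁_hom_apply]
    have := hz g
    rw [hF] at this
    simp only at this
    have : (f : G → V) g = -(V.ρ g v - v) := by
      rw [← sub_eq_zero]; rw [← this]; abel
    rw [this, map_neg]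
    abel
  exact ModuleCat.isZero_of_subsingleton (groupCohomology.H1 V)
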